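/- Define Ω(x₁,x₂) = (x₁f(x₁) − x₂f(x₂))(Q(x₁)+Φ(x₂)) + (Q(x₁)+Φ(x₂))² − (f(x₁)−f(x₂))², where f is the standard normal density, Q its tail function, and Φ its cdf. Then Ω(x₁,x₂) > 0 for all real x₁, x₂. -/

import Mathlib

open Real MeasureTheory Set Filter Topology

noncomputable def stdNormalPdf (x : ℝ) : ℝ := (Real.sqrt (2 * Real.pi))⁻¹ * Real.exp (-x ^ 2 / 2)

noncomputable def gaussQ (x : ℝ) : ℝ := ∫ t in Set.Ici x, stdNormalPdf t

noncomputable def gaussPhi (x : ℝ) : ℝ := ∫ t in Set.Iic x, stdNormalPdf t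

lemma sp_pos (x : ℝ) : 0 < stdNormalPdf x := by
  have h : 0 < Real.sqrt (2 * Real.pi) := Real.sqrt_pos.2 (by positivity)
  exact mul_pos (inv_pos.2 h) (Real.exp_pos _)

lemma sp_cont : Continuous stdNormalPdf := by
  unfold stdNormalPdf; fun_prop

lemma sp_hasDerivAt (x : ℝ) : HasDerivAt stdNormalPdf (-x * stdNormalPdf x) x := by
  have h1 : HasDerivAt (fun y : ℝ => -y ^ 2 / 2) (-x) x := by
    have := ((hasDerivAt_pow 2 x).neg).div_const 2
    exact this.congr_deriv (by norm_num; ring)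
  have h3 := h1.exp.const_mul ((Real.sqrt (2 * Real.pi))⁻¹)
  have hval : -x * stdNormalPdf x
      = (Real.sqrt (2 * Real.pi))⁻¹ * (Real.exp (-x ^ 2 / 2) * -x) := by
    unfold stdNormalPdf; ring
  rw [hval]
  exact h3

lemma sp_even (x : ℝ) : stdNormalPdf (-x) = stdNormalPdf x := by
  unfold stdNormalPdf; ring_nf

lemma sp_integrable : Integrable stdNormalPdf := by
  have h := integrable_exp_neg_mul_sq (by norm_num : (0:ℝ) < 1/2)
  have h2 := h.const_mul ((Real.sqrt (2 * Real.pi))⁻¹)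
  apply h2.congr
  filter_upwards with x
  unfold stdNormalPdf; ring_nf

lemma sq_half_tendsto : Tendsto (fun x : ℝ => x ^ 2 / 2) atTop atTop :=
  (tendsto_pow_atTop two_ne_zero).atTop_div_const two_pos

lemma sp_tendsto : Tendsto stdNormalPdf atTop (𝓝 0) := by
  have h1 : Tendsto (fun x : ℝ => -x ^ 2 / 2) atTop atBot := by
    apply (tendsto_neg_atTop_atBot.comp sq_half_tendsto).congr
    intro x; simp [Function.comp]; ring
  have h2 : Tendsto (fun x : ℝ => Real.exp (-x ^ 2 / 2)) atTop (𝓝 0) :=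
    Real.tendsto_exp_atBot.comp h1
  have := h2.const_mul ((Real.sqrt (2 * Real.pi))⁻¹)
  rw [mul_zero] at this
  exact this.congr fun x => rfl

lemma x2sp_tendsto : Tendsto (fun x : ℝ => x ^ 2 * stdNormalPdf x) atTop (𝓝 0) := by
  have h1 : Tendsto (fun y : ℝ => y ^ 1 * Real.exp (-y)) atTop (𝓝 0) :=
    tendsto_pow_mul_exp_neg_atTop_nhds_zero 1
  have h2 := (h1.comp sq_half_tendsto).const_mul (2 * (Real.sqrt (2 * Real.pi))⁻¹)
  rw [mul_zero] at h2
  apply h2.congr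
  intro x
  simp only [Function.comp, pow_one]
  unfold stdNormalPdf
  rw [show -(x ^ 2 / 2) = -x ^ 2 / 2 by ring]
  ring

lemma xsp_tendsto : Tendsto (fun x : ℝ => x * stdNormalPdf x) atTop (𝓝 0) := by
  apply squeeze_zero' (g := fun x : ℝ => x ^ 2 * stdNormalPdf x)
  · filter_upwards [eventually_ge_atTop (0:ℝ)] with x hx
    exact mul_nonneg hx (sp_pos x).le
  · filter_upwards [eventually_ge_atTop (1:ℝ)] with x hx
    have : x ≤ x ^ 2 := by nlinarith
    exact mul_le_mul_of_nonneg_right this (sp_pos x).le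
  · exact x2sp_tendsto

lemma Phi_add_Q (x : ℝ) : gaussPhi x + gaussQ x = ∫ t, stdNormalPdf t := by
  rw [gaussQ, gaussPhi, integral_Ici_eq_integral_Ioi]
  exact intervalIntegral.integral_Iic_add_Ioi sp_integrable.integrableOn
    sp_integrable.integrableOn

lemma Phi_hasDerivAt (x : ℝ) : HasDerivAt gaussPhi (stdNormalPdf x) x := by
  have key : gaussPhi = fun y => gaussPhi 0 + ∫ t in (0:ℝ)..y, stdNormalPdf t := by
    funext y
    rw [gaussPhi, gaussPhi,
      ← intervalIntegral.integral_Iic_sub_Iic sp_integrable.integrableOn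
        sp_integrable.integrableOn]
    ring
  rw [key]
  exact (intervalIntegral.integral_hasDerivAt_right
    (sp_integrable.intervalIntegrable)
    (sp_cont.stronglyMeasurableAtFilter _ _)
    sp_cont.continuousAt).const_add _

lemma Q_hasDerivAt (x : ℝ) : HasDerivAt gaussQ (-stdNormalPdf x) x := by
  have key : gaussQ = fun y => (∫ t, stdNormalPdf t) - gaussPhi y := by
    funext y; have := Phi_add_Q y; linarith
  rw [key]
  exact (Phi_hasDerivAt x).const_sub _

lemma Q_nonneg (x : ℝ) : 0 ≤ gaussQ x :=
  setIntegral_nonneg measurableSet_Ici fun t _ => (sp_pos t).le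

lemma Phi_nonneg (x : ℝ) : 0 ≤ gaussPhi x :=
  setIntegral_nonneg measurableSet_Iic fun t _ => (sp_pos t).le

lemma Q_neg (x : ℝ) : gaussQ (-x) = gaussPhi x := by
  rw [gaussQ, integral_Ici_eq_integral_Ioi, gaussPhi]
  have h := integral_comp_neg_Ioi (-x) stdNormalPdf
  rw [neg_neg] at h
  rw [← h]
  exact setIntegral_congr_fun measurableSet_Ioi fun t _ => (sp_even t).symm

lemma neg_sp_hasDerivAt (t : ℝ) :
    HasDerivAt (fun y => -stdNormalPdf y) (t * stdNormalPdf t) t := by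
  have := (sp_hasDerivAt t).neg
  rw [show t * stdNormalPdf t = -(-t * stdNormalPdf t) by ring]
  exact this

lemma neg_sp_tendsto : Tendsto (fun y => -stdNormalPdf y) atTop (𝓝 0) := by
  have := sp_tendsto.neg; rw [neg_zero] at this; exact this

lemma integrableOn_xsp {a : ℝ} (ha : 0 < a) :
    IntegrableOn (fun t => t * stdNormalPdf t) (Ioi a) := by
  exact integrableOn_Ioi_deriv_of_nonneg' (fun t _ => neg_sp_hasDerivAt t)
    (fun t ht => mul_nonneg (le_of_lt (lt_trans ha ht)) (sp_pos t).le)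
    neg_sp_tendsto

lemma integral_xsp {a : ℝ} (ha : 0 < a) :
    ∫ t in Ioi a, t * stdNormalPdf t = stdNormalPdf a := by
  have h := integral_Ioi_of_hasDerivAt_of_nonneg' (fun t _ => neg_sp_hasDerivAt t)
    (fun t ht => mul_nonneg (le_of_lt (lt_trans ha ht)) (sp_pos t).le)
    neg_sp_tendsto
  rw [h]; ring

lemma xQ_le_sp (x : ℝ) : x * gaussQ x ≤ stdNormalPdf x := by
  rcases le_or_gt x 0 with hx | hx
  · exact le_trans (mul_nonpos_of_nonpos_of_nonneg hx (Q_nonneg x)) (sp_pos x).le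
  · have h1 : x * gaussQ x = ∫ t in Ioi x, x * stdNormalPdf t := by
      rw [gaussQ, integral_Ici_eq_integral_Ioi, integral_const_mul]
    rw [h1, ← integral_xsp hx]
    apply setIntegral_mono_on
    · exact (sp_integrable.integrableOn).const_mul x
    · exact integrableOn_xsp hx
    · exact measurableSet_Ioi
    · intro t ht
      exact mul_le_mul_of_nonneg_right (le_of_lt ht) (sp_pos t).le

lemma Q_tendsto : Tendsto gaussQ atTop (𝓝 0) := by
  apply squeeze_zero' (g := stdNormalPdf)
  · exact Eventually.of_forall Q_nonneg
  · filter_upwards [eventually_gt_atTop (1:ℝ)] with x hx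
    have h1 : gaussQ x = ∫ t in Ioi x, stdNormalPdf t := by
      rw [gaussQ, integral_Ici_eq_integral_Ioi]
    rw [h1, ← integral_xsp (by linarith : (0:ℝ) < x)]
    apply setIntegral_mono_on sp_integrable.integrableOn
      (integrableOn_xsp (by linarith)) measurableSet_Ioi
    intro t ht
    nlinarith [sp_pos t, lt_trans hx ht]
  · exact sp_tendsto

lemma x2Q_tendsto : Tendsto (fun x : ℝ => x ^ 2 * gaussQ x) atTop (𝓝 0) := by
  apply squeeze_zero' (g := fun x : ℝ => x * stdNormalPdf x)
  · filter_upwards with x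
    exact mul_nonneg (sq_nonneg x) (Q_nonneg x)
  · filter_upwards [eventually_gt_atTop (0:ℝ)] with x hx
    have := xQ_le_sp x
    nlinarith
  · exact xsp_tendsto

lemma nonneg_of_deriv_nonpos {F F' : ℝ → ℝ} (hd : ∀ x, HasDerivAt F (F' x) x)
    (h' : ∀ x, F' x ≤ 0) (hl : Tendsto F atTop (𝓝 0)) (x : ℝ) : 0 ≤ F x := by
  have mono : Antitone F :=
    antitone_of_deriv_nonpos (fun y => (hd y).differentiableAt)
      (fun y => by rw [(hd y).deriv]; exact h' y)
  exact le_of_tendsto hl (eventually_atTop.2 ⟨x, fun y hy => mono hy⟩)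

lemma xsp_hasDerivAt (y : ℝ) : HasDerivAt (fun x : ℝ => x * stdNormalPdf x)
    (stdNormalPdf y - y ^ 2 * stdNormalPdf y) y := by
  have h := (hasDerivAt_id y).mul (sp_hasDerivAt y)
  rw [show stdNormalPdf y - y ^ 2 * stdNormalPdf y
    = 1 * stdNormalPdf y + y * (-y * stdNormalPdf y) by ring]
  exact h

lemma w_nonneg (x : ℝ) : 0 ≤ (1 + x ^ 2) * gaussQ x - x * stdNormalPdf x := by
  refine nonneg_of_deriv_nonpos
    (F := fun x => (1 + x ^ 2) * gaussQ x - x * stdNormalPdf x)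
    (F' := fun x => 2 * (x * gaussQ x - stdNormalPdf x)) ?_ ?_ ?_ x
  · intro y
    have hp : HasDerivAt (fun x : ℝ => 1 + x ^ 2) (2 * y) y := by
      have := (hasDerivAt_pow 2 y).const_add 1
      exact this.congr_deriv (by norm_num)
    have h := (hp.mul (Q_hasDerivAt y)).sub (xsp_hasDerivAt y)
    show HasDerivAt _ (2 * (y * gaussQ y - stdNormalPdf y)) y
    rw [show 2 * (y * gaussQ y - stdNormalPdf y)
      = 2 * y * gaussQ y + (1 + y ^ 2) * -stdNormalPdf y
        - (stdNormalPdf y - y ^ 2 * stdNormalPdf y) by ring]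
    exact h
  · intro y
    show 2 * (y * gaussQ y - stdNormalPdf y) ≤ 0
    have := xQ_le_sp y
    linarith
  · have h1 : Tendsto (fun x : ℝ => gaussQ x + x ^ 2 * gaussQ x - x * stdNormalPdf x)
        atTop (𝓝 (0 + 0 - 0)) := (Q_tendsto.add x2Q_tendsto).sub xsp_tendsto
    simp only [add_zero, sub_zero] at h1
    exact h1.congr fun x => by ring

lemma u_hasDerivAt (y : ℝ) : HasDerivAt (fun x : ℝ => gaussQ x + x * stdNormalPdf x)
    (-(y ^ 2 * stdNormalPdf y)) y := by
  have h := (Q_hasDerivAt y).add (xsp_hasDerivAt y)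
  rw [show -(y ^ 2 * stdNormalPdf y)
    = -stdNormalPdf y + (stdNormalPdf y - y ^ 2 * stdNormalPdf y) by ring]
  exact h

lemma u_tendsto : Tendsto (fun x : ℝ => gaussQ x + x * stdNormalPdf x) atTop (𝓝 0) := by
  have h1 := Q_tendsto.add xsp_tendsto
  rw [add_zero] at h1
  exact h1

lemma u_nonneg (x : ℝ) : 0 ≤ gaussQ x + x * stdNormalPdf x := by
  refine nonneg_of_deriv_nonpos
    (F := fun x => gaussQ x + x * stdNormalPdf x)
    (F' := fun x => -(x ^ 2 * stdNormalPdf x)) u_hasDerivAt ?_ u_tendsto x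
  intro y
  exact neg_nonpos.2 (mul_nonneg (sq_nonneg y) (sp_pos y).le)

lemma g_nonneg (x : ℝ) :
    stdNormalPdf x ^ 2 ≤ gaussQ x * (gaussQ x + x * stdNormalPdf x) := by
  have key : 0 ≤ gaussQ x * (gaussQ x + x * stdNormalPdf x) - stdNormalPdf x ^ 2 := by
    refine nonneg_of_deriv_nonpos
      (F := fun x => gaussQ x * (gaussQ x + x * stdNormalPdf x) - stdNormalPdf x ^ 2)
      (F' := fun x => -stdNormalPdf x * ((1 + x ^ 2) * gaussQ x - x * stdNormalPdf x))
      ?_ ?_ ?_ x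
    · intro y
      have h2 := (Q_hasDerivAt y).mul (u_hasDerivAt y)
      have h3 := (sp_hasDerivAt y).mul (sp_hasDerivAt y)
      have h := h2.sub h3
      have hF : (fun x => gaussQ x * (gaussQ x + x * stdNormalPdf x) - stdNormalPdf x ^ 2)
          = fun x => gaussQ x * (gaussQ x + x * stdNormalPdf x)
            - stdNormalPdf x * stdNormalPdf x := by
        funext z; ring
      rw [hF]
      show HasDerivAt _ (-stdNormalPdf y * ((1 + y ^ 2) * gaussQ y - y * stdNormalPdf y)) y
      rw [show -stdNormalPdf y * ((1 + y ^ 2) * gaussQ y - y * stdNormalPdf y)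
        = -stdNormalPdf y * (gaussQ y + y * stdNormalPdf y)
          + gaussQ y * -(y ^ 2 * stdNormalPdf y)
          - (-y * stdNormalPdf y * stdNormalPdf y + stdNormalPdf y * (-y * stdNormalPdf y))
          by ring]
      exact h
    · intro y
      exact mul_nonpos_of_nonpos_of_nonneg (neg_nonpos.2 (sp_pos y).le) (w_nonneg y)
    · have h1 := (Q_tendsto.mul u_tendsto).sub (sp_tendsto.pow 2)
      rw [mul_zero, show (0:ℝ) ^ 2 = 0 by norm_num, sub_zero] at h1
      exact h1
  linarith

lemma v_nonneg (x : ℝ) : 0 ≤ gaussPhi x - x * stdNormalPdf x := by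
  have := u_nonneg (-x)
  rw [Q_neg, sp_even] at this
  linarith

lemma gPhi_nonneg (x : ℝ) :
    stdNormalPdf x ^ 2 ≤ gaussPhi x * (gaussPhi x - x * stdNormalPdf x) := by
  have := g_nonneg (-x)
  rw [Q_neg, sp_even] at this
  convert this using 2
  ring

theorem stmt9 (x₁ x₂ : ℝ) :
    (x₁ * stdNormalPdf x₁ - x₂ * stdNormalPdf x₂) * (gaussQ x₁ + gaussPhi x₂)
      + (gaussQ x₁ + gaussPhi x₂) ^ 2
      - (stdNormalPdf x₁ - stdNormalPdf x₂) ^ 2 > 0 := by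
  have hQ := Q_nonneg x₁
  have hP := Phi_nonneg x₂
  have hu := u_nonneg x₁
  have hv := v_nonneg x₂
  have hg1 := g_nonneg x₁
  have hg2 := gPhi_nonneg x₂
  have hf := mul_pos (sp_pos x₁) (sp_pos x₂)
  nlinarith [mul_nonneg hQ hv, mul_nonneg hP hu]
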